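/- If f : ℤ_p → ℤ_p is 1-Lipschitz, measure-preserving, XOR-additive (f(x XOR y) = f(x) XOR f(y)) and AND-multiplicative (f(x AND y) = f(x) AND f(y)), and f is not identically 0 or 1, then f is the identity map. -/

import Mathlib

open MeasureTheory

variable (p : ℕ) [Fact p.Prime]

noncomputable instance : MeasurableSpace ℤ_[p] := borel _
instance : BorelSpace ℤ_[p] := ⟨rfl⟩

/-- The normalized Haar measure on `ℤ_[p]` (total mass 1). -/
noncomputable def haarZp : Measure ℤ_[p] := Measure.addHaarMeasure ⊤

/-- The k-th digit of the canonical p-adic expansion of `x`. -/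
noncomputable def digit (x : ℤ_[p]) (k : ℕ) : ℕ := x.appr (k + 1) / p ^ k

/-- Digit-wise addition modulo `p` on `ℤ_[p]`. -/
noncomputable def pXOR (x y : ℤ_[p]) : ℤ_[p] :=
  ∑' k : ℕ, (((digit p x k + digit p y k) % p : ℕ) : ℤ_[p]) * (p : ℤ_[p]) ^ k

/-- Digit-wise multiplication modulo `p` on `ℤ_[p]`. -/
noncomputable def pAND (x y : ℤ_[p]) : ℤ_[p] :=
  ∑' k : ℕ, (((digit p x k * digit p y k) % p : ℕ) : ℤ_[p]) * (p : ℤ_[p]) ^ k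

section Aux
variable {p}

lemma hp1 : 1 < p := (Fact.out : p.Prime).one_lt
lemma hp0 : 0 < p := (Fact.out : p.Prime).pos

lemma appr_unique (x : ℤ_[p]) (n a : ℕ) (ha : a < p ^ n)
    (h : x - (a : ℤ_[p]) ∈ Ideal.span {(p:ℤ_[p])^n}) : x.appr n = a := by
  have h2 := PadicInt.appr_spec n x
  have h3 : ((x.appr n : ℤ_[p]) - (a : ℤ_[p])) ∈ Ideal.span {(p:ℤ_[p])^n} := by
    have := Ideal.sub_mem _ h h2
    simpa using this
  set d : ℤ := (x.appr n : ℤ) - (a : ℤ) with hd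
  have h4 : ‖((d : ℤ) : ℤ_[p])‖ ≤ (p : ℝ) ^ (-n : ℤ) := by
    rw [PadicInt.norm_le_pow_iff_mem_span_pow]
    rw [hd]
    push_cast
    exact h3
  rw [PadicInt.norm_int_le_pow_iff_dvd] at h4
  have hb1 : (x.appr n : ℤ) < p ^ n := by exact_mod_cast PadicInt.appr_lt x n
  have hb2 : (a : ℤ) < p ^ n := by exact_mod_cast ha
  have h5 : d = 0 := Int.eq_zero_of_abs_lt_dvd h4 (abs_lt.mpr
    ⟨by linarith [Int.natCast_nonneg (x.appr n)], by linarith [Int.natCast_nonneg a]⟩)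
  rw [hd] at h5
  omega

lemma digit_lt (x : ℤ_[p]) (k : ℕ) : digit p x k < p := by
  rw [digit, Nat.div_lt_iff_lt_mul (pow_pos hp0 k), ← pow_succ']
  rw [show p ^ (k+1+0) = p ^ (k+1) by ring_nf]
  exact PadicInt.appr_lt x (k+1)

lemma appr_succ (x : ℤ_[p]) (k : ℕ) :
    x.appr (k+1) = x.appr k + digit p x k * p ^ k := by
  have hm := PadicInt.appr_mono x (show k ≤ k+1 by omega)
  obtain ⟨t, ht⟩ := PadicInt.dvd_appr_sub_appr x k (k+1) (show k ≤ k+1 by omega)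
  have h1 : x.appr (k+1) = x.appr k + p ^ k * t := by omega
  have h2 : digit p x k = t := by
    rw [digit, h1, Nat.add_mul_div_left _ _ (pow_pos hp0 k),
      Nat.div_eq_of_lt (PadicInt.appr_lt x k), zero_add]
  rw [h2, mul_comm]; omega

lemma appr_eq_sum (x : ℤ_[p]) (n : ℕ) :
    x.appr n = ∑ k ∈ Finset.range n, digit p x k * p ^ k := by
  induction n with
  | zero => simp [PadicInt.appr]
  | succ n ih => rw [appr_succ, Finset.sum_range_succ, ih]

lemma appr_mod (x : ℤ_[p]) {m n : ℕ} (h : m ≤ n) : x.appr n % p ^ m = x.appr m := by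
  have hm := PadicInt.appr_mono x h
  obtain ⟨t, ht⟩ := PadicInt.dvd_appr_sub_appr x m n h
  have h1 : x.appr n = x.appr m + p ^ m * t := by omega
  rw [h1, mul_comm, Nat.add_mul_mod_self_right, Nat.mod_eq_of_lt (PadicInt.appr_lt x m)]

lemma digit_eq_of_appr_eq {x y : ℤ_[p]} {n : ℕ} (h : x.appr n = y.appr n) :
    ∀ k, k < n → digit p x k = digit p y k := by
  intro k hk
  rw [digit, digit, ← appr_mod x hk, ← appr_mod y hk, h]

lemma digits_inj {x y : ℤ_[p]} (h : ∀ k, digit p x k = digit p y k) : x = y := by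
  have happr : ∀ n, x.appr n = y.appr n := by
    intro n; rw [appr_eq_sum, appr_eq_sum]
    exact Finset.sum_congr rfl fun k _ => by rw [h k]
  have hnorm : ∀ n : ℕ, ‖x - y‖ ≤ (p : ℝ) ^ (-n : ℤ) := by
    intro n
    rw [PadicInt.norm_le_pow_iff_mem_span_pow]
    have h1 := PadicInt.appr_spec n x
    have h2 := PadicInt.appr_spec n y
    have : x - y = (x - x.appr n) - (y - y.appr n) := by rw [happr n]; ring
    rw [this]
    exact Ideal.sub_mem _ h1 h2
  have hp1' : (1:ℝ) < p := by exact_mod_cast hp1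
  have htend : Filter.Tendsto (fun n : ℕ => (p:ℝ) ^ (-n : ℤ)) Filter.atTop (nhds 0) := by
    have : ∀ n : ℕ, (p:ℝ) ^ (-n : ℤ) = ((p:ℝ)⁻¹) ^ n := by
      intro n; rw [zpow_neg, zpow_natCast, inv_pow]
    simp only [this]
    exact tendsto_pow_atTop_nhds_zero_of_lt_one (by positivity)
      (inv_lt_one_of_one_lt₀ hp1')
  have h0 : ‖x - y‖ ≤ 0 := ge_of_tendsto htend (Filter.Eventually.of_forall hnorm)
  have : x - y = 0 := by
    rw [← norm_eq_zero]; exact le_antisymm h0 (norm_nonneg _)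
  exact sub_eq_zero.mp this

lemma summable_digits (c : ℕ → ℕ) :
    Summable (fun k => ((c k : ℤ_[p]) * (p:ℤ_[p]) ^ k)) := by
  have hp1' : (1:ℝ) < p := by exact_mod_cast hp1
  apply Summable.of_norm_bounded (g := fun k => ((p:ℝ)⁻¹) ^ k)
    (summable_geometric_of_lt_one (by positivity) (inv_lt_one_of_one_lt₀ hp1'))
  intro k
  calc ‖(c k : ℤ_[p]) * (p:ℤ_[p]) ^ k‖ ≤ ‖(c k : ℤ_[p])‖ * ‖(p:ℤ_[p]) ^ k‖ := norm_mul_le _ _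
    _ ≤ 1 * ((p:ℝ)⁻¹) ^ k := by
        apply mul_le_mul (PadicInt.norm_le_one _) _ (norm_nonneg _) zero_le_one
        rw [PadicInt.norm_p_pow, zpow_neg, zpow_natCast, inv_pow]
    _ = ((p:ℝ)⁻¹) ^ k := one_mul _

lemma norm_term_le (c k n : ℕ) (h : n ≤ k) :
    ‖(c : ℤ_[p]) * (p:ℤ_[p]) ^ k‖ ≤ (p:ℝ) ^ (-n : ℤ) := by
  have hp1' : (1:ℝ) < p := by exact_mod_cast hp1
  calc ‖(c : ℤ_[p]) * (p:ℤ_[p]) ^ k‖ ≤ ‖(c : ℤ_[p])‖ * ‖(p:ℤ_[p]) ^ k‖ := norm_mul_le _ _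
    _ ≤ 1 * (p:ℝ) ^ (-k : ℤ) := by
        apply mul_le_mul (PadicInt.norm_le_one _) _ (norm_nonneg _) zero_le_one
        rw [PadicInt.norm_p_pow]
    _ = (p:ℝ) ^ (-k : ℤ) := one_mul _
    _ ≤ (p:ℝ) ^ (-n : ℤ) := by
        apply zpow_le_zpow_right₀ (le_of_lt hp1')
        omega

lemma sum_digits_lt (c : ℕ → ℕ) (hc : ∀ k, c k < p) (n : ℕ) :
    ∑ k ∈ Finset.range n, c k * p ^ k < p ^ n := by
  induction n with
  | zero => simp
  | succ n ih =>
    rw [Finset.sum_range_succ]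
    calc ∑ k ∈ Finset.range n, c k * p ^ k + c n * p ^ n
        < p ^ n + c n * p ^ n := by omega
      _ = (c n + 1) * p ^ n := by ring
      _ ≤ p * p ^ n := Nat.mul_le_mul_right _ (hc n)
      _ = p ^ (n+1) := by rw [pow_succ]; ring

lemma appr_tsum (c : ℕ → ℕ) (hc : ∀ k, c k < p) (n : ℕ) :
    (∑' k, ((c k : ℤ_[p]) * (p:ℤ_[p]) ^ k)).appr n = ∑ k ∈ Finset.range n, c k * p ^ k := by
  apply appr_unique _ _ _ (sum_digits_lt c hc n)
  have hs := summable_digits (p := p) c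
  have hsplit := Summable.sum_add_tsum_nat_add (f := fun k => ((c k : ℤ_[p]) * (p:ℤ_[p]) ^ k)) n hs
  rw [← PadicInt.norm_le_pow_iff_mem_span_pow]
  have hcast : ((∑ k ∈ Finset.range n, c k * p ^ k : ℕ) : ℤ_[p])
      = ∑ k ∈ Finset.range n, (c k : ℤ_[p]) * (p:ℤ_[p]) ^ k := by push_cast; rfl
  rw [hcast, ← hsplit, add_sub_cancel_left]
  apply IsUltrametricDist.norm_tsum_le_of_forall_le_of_nonneg (by positivity)
  intro i
  exact norm_term_le _ _ _ (by omega)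

lemma digit_tsum (c : ℕ → ℕ) (hc : ∀ k, c k < p) (n : ℕ) :
    digit p (∑' k, ((c k : ℤ_[p]) * (p:ℤ_[p]) ^ k)) n = c n := by
  rw [digit, appr_tsum c hc (n+1), Finset.sum_range_succ,
    Nat.add_mul_div_right _ _ (pow_pos hp0 n),
    Nat.div_eq_of_lt (sum_digits_lt c hc n), zero_add]

lemma digit_pXOR (x y : ℤ_[p]) (k : ℕ) :
    digit p (pXOR p x y) k = (digit p x k + digit p y k) % p :=
  digit_tsum _ (fun _ => Nat.mod_lt _ hp0) k

lemma digit_pAND (x y : ℤ_[p]) (k : ℕ) :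
    digit p (pAND p x y) k = (digit p x k * digit p y k) % p :=
  digit_tsum _ (fun _ => Nat.mod_lt _ hp0) k

lemma digit_zero (k : ℕ) : digit p (0 : ℤ_[p]) k = 0 := by
  have h : (0:ℤ_[p]).appr (k+1) = 0 :=
    appr_unique 0 (k+1) 0 (pow_pos hp0 _) (by simpa using Ideal.zero_mem _)
  rw [digit, h, Nat.zero_div]

lemma norm_le_iff_digit_eq (x y : ℤ_[p]) (n : ℕ) :
    ‖x - y‖ ≤ (p:ℝ) ^ (-n : ℤ) ↔ ∀ k, k < n → digit p x k = digit p y k := by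
  constructor
  · intro h k hk
    have hmem : x - y ∈ Ideal.span {(p:ℤ_[p])^n} :=
      (PadicInt.norm_le_pow_iff_mem_span_pow _ n).mp h
    have : y - (x.appr n : ℤ_[p]) ∈ Ideal.span {(p:ℤ_[p])^n} := by
      have h2 := PadicInt.appr_spec n x
      have : y - (x.appr n : ℤ_[p]) = (x - (x.appr n : ℤ_[p])) - (x - y) := by ring
      rw [this]
      exact Ideal.sub_mem _ h2 hmem
    have happr : y.appr n = x.appr n := appr_unique y n _ (PadicInt.appr_lt x n) this
    exact (digit_eq_of_appr_eq happr.symm k hk).symm ▸ rfl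
  · intro h
    have happr : x.appr n = y.appr n := by
      rw [appr_eq_sum, appr_eq_sum]
      exact Finset.sum_congr rfl fun k hk => by
        rw [h k (Finset.mem_range.mp hk)]
    rw [PadicInt.norm_le_pow_iff_mem_span_pow]
    have : x - y = (x - (x.appr n : ℤ_[p])) - (y - (y.appr n : ℤ_[p])) := by
      rw [happr]; ring
    rw [this]
    exact Ideal.sub_mem _ (PadicInt.appr_spec n x) (PadicInt.appr_spec n y)

lemma appr_natCast (a n : ℕ) : ((a : ℕ) : ℤ_[p]).appr n = a % p ^ n := by
  apply appr_unique _ _ _ (Nat.mod_lt _ (pow_pos hp0 n))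
  rw [Ideal.mem_span_singleton]
  refine ⟨((a / p ^ n : ℕ) : ℤ_[p]), ?_⟩
  have : a = p ^ n * (a / p ^ n) + a % p ^ n := (Nat.div_add_mod a (p^n)).symm
  calc ((a : ℕ) : ℤ_[p]) - ((a % p ^ n : ℕ) : ℤ_[p])
      = ((p ^ n * (a / p ^ n) + a % p ^ n : ℕ) : ℤ_[p]) - ((a % p ^ n : ℕ) : ℤ_[p]) := by
        rw [← this]
    _ = (p:ℤ_[p]) ^ n * ((a / p ^ n : ℕ) : ℤ_[p]) := by push_cast; ring

lemma digit_natCast (a k : ℕ) : digit p ((a : ℕ) : ℤ_[p]) k = a / p ^ k % p := by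
  rw [digit, appr_natCast, pow_succ, Nat.mod_mul_right_div_self]

/-- single-digit element: digit `a % p` in position `j`. -/
noncomputable def sd (j a : ℕ) : ℤ_[p] :=
  ∑' k : ℕ, (((if k = j then a % p else 0) : ℕ) : ℤ_[p]) * (p : ℤ_[p]) ^ k

lemma sd_cond (j a : ℕ) : ∀ k, (if k = j then a % p else 0) < p := by
  intro k; split
  · exact Nat.mod_lt _ hp0
  · exact hp0

lemma digit_sd (j a k : ℕ) : digit p (sd (p := p) j a) k = if k = j then a % p else 0 :=
  digit_tsum _ (sd_cond j a) k

lemma sd_zero (j : ℕ) : sd (p := p) j 0 = 0 :=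
  digits_inj fun k => by rw [digit_sd, digit_zero]; simp

lemma xor_sd (j a b : ℕ) : pXOR p (sd j a) (sd j b) = sd j (a + b) :=
  digits_inj fun k => by
    rw [digit_pXOR, digit_sd, digit_sd, digit_sd]
    split
    · rw [← Nat.add_mod]
    · simp

lemma and_sd (j a b : ℕ) : pAND p (sd j a) (sd j b) = sd j (a * b) :=
  digits_inj fun k => by
    rw [digit_pAND, digit_sd, digit_sd, digit_sd]
    split
    · rw [← Nat.mul_mod]
    · simp

lemma and_sd_ne {i j : ℕ} (h : i ≠ j) (a b : ℕ) : pAND p (sd i a) (sd j b) = 0 :=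
  digits_inj fun k => by
    rw [digit_pAND, digit_sd, digit_sd, digit_zero]
    rcases eq_or_ne k i with rfl | hk
    · rw [if_neg h]; simp
    · rw [if_neg hk]; simp

noncomputable def gfold (a : ℕ) : ℕ → ℤ_[p]
  | 0 => 0
  | n+1 => pXOR p (gfold a n) (sd n (a / p ^ n))

lemma digit_gfold (a : ℕ) (n i : ℕ) :
    digit p (gfold (p := p) a n) i = if i < n then a / p ^ i % p else 0 := by
  induction n with
  | zero => rw [gfold, digit_zero]; simp
  | succ n ih =>
    rw [gfold, digit_pXOR, ih, digit_sd]
    rcases lt_trichotomy i n with h | rfl | h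
    · rw [if_pos h, if_neg (by omega), if_pos (by omega), Nat.add_zero, Nat.mod_mod_of_dvd _ dvd_rfl]
    · rw [if_neg (by omega), if_pos rfl, if_pos (by omega), Nat.zero_add, Nat.mod_mod_of_dvd _ dvd_rfl]
    · rw [if_neg (by omega), if_neg (by omega), if_neg (by omega)]; simp

lemma cast_eq_gfold {n a : ℕ} (h : a < p ^ n) : ((a : ℕ) : ℤ_[p]) = gfold a n :=
  digits_inj fun i => by
    rw [digit_natCast, digit_gfold]
    split
    · rfl
    · rename_i hi
      rw [Nat.div_eq_of_lt (lt_of_lt_of_le h (Nat.pow_le_pow_right hp0 (by omega))), Nat.zero_mod]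

section F
variable {f : ℤ_[p] → ℤ_[p]}

lemma f_zero (hxor : ∀ x y : ℤ_[p], f (pXOR p x y) = pXOR p (f x) (f y)) : f 0 = 0 := by
  have h00 : pXOR p (0:ℤ_[p]) 0 = (0:ℤ_[p]) :=
    digits_inj fun k => by rw [digit_pXOR, digit_zero]; simp
  have h : f 0 = pXOR p (f 0) (f 0) := by
    have := hxor 0 0; rw [h00] at this; exact this
  apply digits_inj; intro k
  rw [digit_zero]
  have hd : digit p (f 0) k = (digit p (f 0) k + digit p (f 0) k) % p := by
    conv_lhs => rw [h, digit_pXOR]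
  set d := digit p (f 0) k with hdef
  have hlt : d < p := digit_lt _ _
  have hdm := Nat.div_add_mod (d + d) p
  set q := (d + d) / p with hq
  have hdq : d = p * q := by omega
  rcases Nat.eq_zero_or_pos q with h0 | h0
  · rw [h0, Nat.mul_zero] at hdq; exact hdq
  · exfalso
    have : p ≤ p * q := Nat.le_mul_of_pos_right p h0
    omega

variable (hxor : ∀ x y : ℤ_[p], f (pXOR p x y) = pXOR p (f x) (f y))
variable (hand : ∀ x y : ℤ_[p], f (pAND p x y) = pAND p (f x) (f y))

include hxor hand in
lemma chi_dichotomy (k j : ℕ) :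
    digit p (f (sd j 1)) k = 0 ∨ digit p (f (sd j 1)) k = 1 := by
  set c := digit p (f (sd j 1)) k with hc
  have hmul : c = (c * c) % p := by
    conv_lhs => rw [hc, show (1:ℕ) = 1 * 1 by norm_num, ← and_sd, hand, digit_pAND]
  have hlt : c < p := digit_lt _ _
  rcases Nat.eq_zero_or_pos c with h0 | h0
  · left; exact h0
  · have hge : c ≤ c * c := Nat.le_mul_of_pos_right c h0
    have hdm := Nat.div_add_mod (c * c) p
    set q := (c * c) / p with hq
    have hsub : c * (c - 1) = p * q := by
      have : c * (c - 1) = c * c - c := by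
        rw [Nat.mul_sub, Nat.mul_one]
      omega
    have hdvd : p ∣ c * (c - 1) := ⟨q, hsub⟩
    rcases ((Fact.out : p.Prime).dvd_mul.mp hdvd) with h | h
    · exfalso; exact absurd (Nat.le_of_dvd h0 h) (by omega)
    · right
      rcases Nat.eq_zero_or_pos (c - 1) with h1 | h1
      · omega
      · exfalso; exact absurd (Nat.le_of_dvd h1 h) (by omega)

include hxor hand in
lemma chi_lin (k j : ℕ) (a : ℕ) :
    digit p (f (sd j a)) k = (a * digit p (f (sd j 1)) k) % p := by
  induction a with
  | zero =>
    rw [sd_zero, f_zero hxor, digit_zero, Nat.zero_mul, Nat.zero_mod]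
  | succ a ih =>
    have : sd (p := p) j (a + 1) = pXOR p (sd j a) (sd j 1) := (xor_sd j a 1).symm
    rw [this, hxor, digit_pXOR, ih, Nat.mod_add_mod, Nat.succ_mul]

include hxor hand in
lemma chi_cross {i j : ℕ} (h : i ≠ j) (k : ℕ) :
    digit p (f (sd i 1)) k * digit p (f (sd j 1)) k % p = 0 := by
  have h1 : pAND p (f (sd i 1)) (f (sd j 1)) = 0 := by
    rw [← hand, and_sd_ne h, f_zero hxor]
  have := congrArg (fun z => digit p z k) h1
  simpa [digit_pAND, digit_zero] using this

variable (hlip : ∀ x y : ℤ_[p], ‖f x - f y‖ ≤ ‖x - y‖)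

lemma digit_eq_appr_div (x : ℤ_[p]) {j n : ℕ} (h : j < n) :
    digit p x j = x.appr n / p ^ j % p := by
  rw [digit, ← appr_mod x (show j + 1 ≤ n by omega), pow_succ, Nat.mod_mul_right_div_self]

include hlip in
lemma digit_f_appr (x : ℤ_[p]) (k : ℕ) :
    digit p (f x) k = digit p (f ((x.appr (k+1) : ℕ) : ℤ_[p])) k := by
  have hdig : ∀ i, i < k + 1 → digit p x i = digit p ((x.appr (k+1) : ℕ) : ℤ_[p]) i := by
    intro i hi
    rw [digit_natCast, digit_eq_appr_div x hi]
  have h1 : ‖x - ((x.appr (k+1) : ℕ) : ℤ_[p])‖ ≤ (p:ℝ) ^ (-(k+1 : ℕ) : ℤ) :=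
    (norm_le_iff_digit_eq _ _ _).mpr hdig
  have h2 := le_trans (hlip x _) h1
  exact (norm_le_iff_digit_eq _ _ _).mp h2 k (by omega)

include hxor in
lemma digit_f_gfold (k a : ℕ) (n : ℕ) :
    digit p (f (gfold a n)) k
      = (∑ j ∈ Finset.range n, digit p (f (sd j (a / p ^ j))) k) % p := by
  induction n with
  | zero =>
    rw [gfold, f_zero hxor, digit_zero, Finset.sum_range_zero, Nat.zero_mod]
  | succ n ih =>
    rw [gfold, hxor, digit_pXOR, ih, Finset.sum_range_succ, Nat.mod_add_mod]

include hxor hand hlip in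
lemma dichotomy (k : ℕ) :
    (∀ x, digit p (f x) k = 0) ∨ ∃ j, j ≤ k ∧ ∀ x, digit p (f x) k = digit p x j := by
  have key : ∀ x : ℤ_[p], digit p (f x) k
      = (∑ j ∈ Finset.range (k+1),
          ((x.appr (k+1) / p ^ j) * digit p (f (sd j 1)) k) % p) % p := by
    intro x
    rw [digit_f_appr hlip x k, cast_eq_gfold (PadicInt.appr_lt x (k+1)),
      digit_f_gfold hxor (f := f) k _ (k+1)]
    congr 1
    exact Finset.sum_congr rfl fun j _ => chi_lin hxor hand k j _
  by_cases hA : ∀ j, j < k + 1 → digit p (f (sd j 1)) k = 0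
  · left
    intro x
    rw [key x]
    have : ∀ j ∈ Finset.range (k+1),
        (x.appr (k+1) / p ^ j) * digit p (f (sd j 1)) k % p = 0 := by
      intro j hj
      rw [hA j (Finset.mem_range.mp hj), Nat.mul_zero, Nat.zero_mod]
    rw [Finset.sum_eq_zero this, Nat.zero_mod]
  · right
    push_neg at hA
    obtain ⟨j0, hj0lt, hj0⟩ := hA
    have hc1 : digit p (f (sd j0 1)) k = 1 := by
      rcases chi_dichotomy hxor hand k j0 with h | h
      · exact absurd h hj0
      · exact h
    refine ⟨j0, by omega, fun x => ?_⟩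
    have hothers : ∀ j, j ≠ j0 → digit p (f (sd j 1)) k = 0 := by
      intro j hj
      rcases chi_dichotomy hxor hand k j with h | h
      · exact h
      · exfalso
        have := chi_cross hxor hand hj k
        rw [h, hc1, Nat.one_mul, Nat.mod_eq_of_lt hp1] at this
        omega
    rw [key x]
    rw [Finset.sum_eq_single j0]
    · rw [hc1, Nat.mul_one, Nat.mod_mod_of_dvd _ dvd_rfl,
        digit_eq_appr_div x (show j0 < k + 1 by omega)]
    · intro j _ hj
      rw [hothers j hj, Nat.mul_zero, Nat.zero_mod]
    · intro hmem
      exact absurd (Finset.mem_range.mpr (by omega)) hmem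

end F

lemma isOpen_digit_eq (k v : ℕ) : IsOpen {z : ℤ_[p] | digit p z k = v} := by
  rw [Metric.isOpen_iff]
  intro z hz
  have hp0' : (0:ℝ) < p := by exact_mod_cast hp0
  refine ⟨(p:ℝ) ^ (-(k+1 : ℕ) : ℤ), zpow_pos hp0' _, fun w hw => ?_⟩
  rw [Metric.mem_ball, dist_eq_norm] at hw
  have hd := (norm_le_iff_digit_eq w z (k+1)).mp hw.le k (by omega)
  simp only [Set.mem_setOf_eq] at hz ⊢
  rw [hd, hz]

lemma isOpen_digit_ne (k j : ℕ) : IsOpen {z : ℤ_[p] | digit p z k ≠ digit p z j} := by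
  rw [Metric.isOpen_iff]
  intro z hz
  have hp0' : (0:ℝ) < p := by exact_mod_cast hp0
  refine ⟨(p:ℝ) ^ (-(max k j + 1 : ℕ) : ℤ), zpow_pos hp0' _, fun w hw => ?_⟩
  rw [Metric.mem_ball, dist_eq_norm] at hw
  have hdk := (norm_le_iff_digit_eq w z (max k j + 1)).mp hw.le k (by omega)
  have hdj := (norm_le_iff_digit_eq w z (max k j + 1)).mp hw.le j (by omega)
  simp only [Set.mem_setOf_eq] at hz ⊢
  rw [hdk, hdj]
  exact hz

lemma digit_sd_one_self (k : ℕ) : digit p (sd (p := p) k 1) k = 1 := by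
  rw [digit_sd, if_pos rfl, Nat.mod_eq_of_lt hp1]

lemma digit_sd_one_ne {k j : ℕ} (h : j ≠ k) : digit p (sd (p := p) k 1) j = 0 := by
  rw [digit_sd, if_neg h]


end Aux

theorem stmt_15 (f : ℤ_[p] → ℤ_[p])
    (hlip : ∀ x y : ℤ_[p], ‖f x - f y‖ ≤ ‖x - y‖)
    (hmp : MeasurePreserving f (haarZp p) (haarZp p))
    (hxor : ∀ x y : ℤ_[p], f (pXOR p x y) = pXOR p (f x) (f y))
    (hand : ∀ x y : ℤ_[p], f (pAND p x y) = pAND p (f x) (f y))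
    (hne0 : ∃ x : ℤ_[p], f x ≠ 0) (hne1 : ∃ x : ℤ_[p], f x ≠ 1) :
    ∀ x : ℤ_[p], f x = x := by
  haveI h1 : (haarZp p).IsAddLeftInvariant :=
    Measure.isAddLeftInvariant_addHaarMeasure ⊤
  haveI h2 : (haarZp p).Regular := Measure.regular_addHaarMeasure
  haveI h3 : NeZero (haarZp p) := by
    constructor
    intro h
    have hs := Measure.addHaarMeasure_self
      (K₀ := (⊤ : TopologicalSpace.PositiveCompacts ℤ_[p]))
    rw [show Measure.addHaarMeasure (⊤ : TopologicalSpace.PositiveCompacts ℤ_[p])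
        = haarZp p from rfl, h] at hs
    simp at hs
  have hpos : ∀ {S : Set ℤ_[p]}, IsOpen S → S.Nonempty → f ⁻¹' S = ∅ → False := by
    intro S hS hne hpre
    have h := hmp.measure_preimage hS.measurableSet.nullMeasurableSet
    rw [hpre, measure_empty] at h
    exact (hS.measure_pos (haarZp p) hne).ne' h.symm
  have key : ∀ k x, digit p (f x) k = digit p x k := by
    intro k
    induction k using Nat.strong_induction_on with
    | _ k IH =>
      rcases dichotomy hxor hand hlip k with hA | ⟨j, hjk, hB⟩
      · exfalso
        apply hpos (isOpen_digit_eq k 1) ⟨sd k 1, digit_sd_one_self k⟩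
        apply Set.eq_empty_iff_forall_notMem.mpr
        intro x hx
        rw [Set.mem_preimage, Set.mem_setOf_eq, hA x] at hx
        exact absurd hx (by omega)
      · rcases Nat.lt_or_ge j k with hlt | hge
        · exfalso
          apply hpos (isOpen_digit_ne k j)
            ⟨sd k 1, by
              rw [Set.mem_setOf_eq, digit_sd_one_self, digit_sd_one_ne (by omega)]
              omega⟩
          apply Set.eq_empty_iff_forall_notMem.mpr
          intro x hx
          rw [Set.mem_preimage, Set.mem_setOf_eq] at hx
          exact hx (by rw [hB x, IH j hlt x])
        · have hjeq : j = k := by omega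
          subst hjeq
          exact hB
  intro x
  exact digits_inj fun k => key k x
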